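/- Let P be a graph property whose decision problem asks, given a Rikudo game (τ, m, p), whether it has a solution, and suppose this problem is NP-hard even when dom(m) = {cells of 1 and n}. Then for any real constant 0 < α ≤ 1, the restriction to games with |dom(m)| ≥ α·|τ| is also NP-hard: given an instance with n' cells, append a path of ⌈n'/α⌉ − n' extra cells with all their numbers n'+1, …, ⌈n'/α⌉ pre-placed along the path; the padded game has a solution iff the original does. -/

import Mathlib

def hexOffsets : Set (ℤ × ℤ) := {(1,0), (-1,0), (0,1), (0,-1), (1,-1), (-1,1)}

def hexAdjRel (a b : ℤ × ℤ) : Prop := (b.1 - a.1, b.2 - a.2) ∈ hexOffsets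

/-- The adjacency graph of the hexagonal grid cells. -/
def hexGraph : SimpleGraph (ℤ × ℤ) := SimpleGraph.fromRel hexAdjRel

/-- `s` is a solution of the Rikudo game `(τ, m, p)`. -/
def IsRikudoSolution (τ : Finset (ℤ × ℤ)) (m : (ℤ × ℤ) → Option ℕ)
    (p : Set ((ℤ × ℤ) × (ℤ × ℤ))) (s : (ℤ × ℤ) → ℕ) : Prop :=
  Set.BijOn s (τ : Set (ℤ × ℤ)) (Set.Icc 1 τ.card) ∧
  (∀ c ∈ τ, ∀ c' ∈ τ, s c' = s c + 1 → hexGraph.Adj c c') ∧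
  (∀ c ∈ τ, ∀ k, m c = some k → s c = k) ∧
  (∀ a b : ℤ × ℤ, (a, b) ∈ p → s a + 1 = s b ∨ s b + 1 = s a)

/-- Padding a Rikudo game (whose placed numbers are exactly `1` and `n' = |τ|`,
on adjacent cells) with a path `q` of `⌈n'/α⌉ - n'` fresh cells attached to the
cell numbered `n'`, pre-placing the numbers `n'+1, …, ⌈n'/α⌉` along `q`:
the padded game has a solution iff the original game does.  (This is the
padding argument showing `α`-Rikudo without holes is `NP`-hard.) -/
theorem stmt14 (α : ℝ) (hα0 : 0 < α) (hα1 : α ≤ 1)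
    (τ : Finset (ℤ × ℤ)) (m : (ℤ × ℤ) → Option ℕ) (p : Set ((ℤ × ℤ) × (ℤ × ℤ)))
    (t₁ tₙ : ℤ × ℤ) (ht₁ : t₁ ∈ τ) (htₙ : tₙ ∈ τ) (htadj : hexGraph.Adj t₁ tₙ)
    (hm₁ : m t₁ = some 1) (hmₙ : m tₙ = some τ.card)
    (hdom : ∀ c, m c ≠ none → c = t₁ ∨ c = tₙ)
    (hpdom : ∀ a b : ℤ × ℤ, (a, b) ∈ p → a ∈ τ ∧ b ∈ τ)
    (q : List (ℤ × ℤ)) (hq : q ≠ []) (hqnd : q.Nodup)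
    (hqτ : ∀ c ∈ q, c ∉ τ)
    (hqchain : List.Chain hexGraph.Adj tₙ q)
    (hqlen : q.length = ⌈(τ.card : ℝ) / α⌉₊ - τ.card) :
    (∃ s, IsRikudoSolution τ m p s) ↔
      (∃ s, IsRikudoSolution (τ ∪ q.toFinset)
        (fun c => if c ∈ q then some (τ.card + q.idxOf c + 1) else m c) p s) := by
  classical
  have hdisj : Disjoint τ q.toFinset := by
    rw [Finset.disjoint_right]
    intro c hc
    exact hqτ c (List.mem_toFinset.mp hc)
  have hcard : (τ ∪ q.toFinset).card = τ.card + q.length := by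
    rw [Finset.card_union_of_disjoint hdisj, List.toFinset_card_of_nodup hqnd]
  have hmem : ∀ c : ℤ × ℤ, c ∈ τ ∪ q.toFinset ↔ c ∈ τ ∨ c ∈ q := by
    intro c; simp [Finset.mem_union]
  have hbeq : (@instBEqOfDecidableEq (ℤ × ℤ) instDecidableEqProd) = (instBEqProd : BEq (ℤ × ℤ)) :=
    @lawful_beq_subsingleton (ℤ × ℤ) _ _ (@instLawfulBEq (ℤ × ℤ) instDecidableEqProd) inferInstance
  have hidx : ∀ c ∈ q, q.idxOf c < q.length := by
    exact fun c hc => List.idxOf_lt_length_iff.mpr hc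
  have hget : ∀ (j : ℕ) (h : j < q.length), q.idxOf (q.get ⟨j, h⟩) = j := by
    intro j h; simpa using hqnd.idxOf_getElem j h
  have hinj : ∀ a ∈ q, ∀ b ∈ q, q.idxOf a = q.idxOf b → a = b := by
    intro a ha b hb h; exact (List.idxOf_inj ha).mp h
  have hgetidx : ∀ c ∈ q, ∀ (h : q.idxOf c < q.length), q.get ⟨q.idxOf c, h⟩ = c := by
    intro c hc h; exact List.idxOf_get h
  have hchain : (∀ h : 0 < q.length, hexGraph.Adj tₙ (q.get ⟨0, h⟩)) ∧
      ∀ (i : ℕ) (h : i < q.length - 1), hexGraph.Adj (q.get ⟨i, by omega⟩) (q.get ⟨i + 1, by omega⟩) := by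
    have hc := List.isChain_iff_getElem.mp (show List.IsChain hexGraph.Adj (tₙ :: q) from hqchain)
    exact ⟨fun h => by simpa using hc 0 (by simp; omega), fun i h => hc (i + 1) (by simp; omega)⟩
  constructor
  · rintro ⟨s, hbij, hadj, hplace, hp⟩
    set s' : (ℤ × ℤ) → ℕ := fun c => if c ∈ q then τ.card + q.idxOf c + 1 else s c with hs'
    have hs'τ : ∀ c ∈ τ, s' c = s c := by
      intro c hc
      simp only [hs']
      rw [if_neg (fun hcq => hqτ c hcq hc)]
    have hs'q : ∀ c ∈ q, s' c = τ.card + q.idxOf c + 1 := by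
      intro c hc; simp only [hs']; rw [if_pos hc]
    have hsle : ∀ c ∈ τ, 1 ≤ s c ∧ s c ≤ τ.card := fun c hc => hbij.mapsTo hc
    refine ⟨s', ?_, ?_, ?_, ?_⟩
    · rw [hcard]
      refine ⟨?_, ?_, ?_⟩
      · intro c hc
        rcases (hmem c).mp hc with hc | hc
        · rw [hs'τ c hc]
          obtain ⟨h1, h2⟩ := hsle c hc
          exact ⟨h1, h2.trans (Nat.le_add_right _ _)⟩
        · rw [hs'q c hc]
          have := hidx c hc
          constructor <;> omega
      · intro a ha b hb hab
        rcases (hmem a).mp ha with ha' | ha' <;> rcases (hmem b).mp hb with hb' | hb'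
        · rw [hs'τ a ha', hs'τ b hb'] at hab
          exact hbij.injOn ha' hb' hab
        · rw [hs'τ a ha', hs'q b hb'] at hab
          have := (hsle a ha').2; omega
        · rw [hs'q a ha', hs'τ b hb'] at hab
          have := (hsle b hb').2; omega
        · rw [hs'q a ha', hs'q b hb'] at hab
          exact hinj a ha' b hb' (by omega)
      · intro k hk
        obtain ⟨hk1, hk2⟩ := hk
        by_cases hkn : k ≤ τ.card
        · obtain ⟨c, hc, hsc⟩ := hbij.surjOn ⟨hk1, hkn⟩
          exact ⟨c, (hmem c).mpr (Or.inl hc), by rw [hs'τ c hc]; exact hsc⟩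
        · have hj : k - τ.card - 1 < q.length := by omega
          refine ⟨q.get ⟨k - τ.card - 1, hj⟩, (hmem _).mpr (Or.inr (q.get_mem _)), ?_⟩
          rw [hs'q _ (q.get_mem _), hget _ hj]
          omega
    · intro c hc c' hc' hsc
      rcases (hmem c).mp hc with h1 | h1 <;> rcases (hmem c').mp hc' with h2 | h2
      · rw [hs'τ c h1, hs'τ c' h2] at hsc
        exact hadj c h1 c' h2 hsc
      · -- c ∈ τ, c' ∈ q : then s c = τ.card, so c = tₙ, and c' is the head of q
        rw [hs'τ c h1, hs'q c' h2] at hsc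
        have h2' := (hsle c h1).2
        have hi0 : q.idxOf c' = 0 := by omega
        have hscn : s c = τ.card := by omega
        have hstₙ : s tₙ = τ.card := hplace tₙ htₙ _ hmₙ
        have hctₙ : c = tₙ := hbij.injOn h1 htₙ (by rw [hscn, hstₙ])
        have hlen0 : 0 < q.length := List.length_pos_iff.mpr hq
        have hc'head : q.get ⟨0, hlen0⟩ = c' := by
          have h := hgetidx c' h2 (hidx c' h2)
          have he : (⟨q.idxOf c', hidx c' h2⟩ : Fin q.length) = ⟨0, hlen0⟩ := Fin.ext hi0
          rw [he] at h
          exact h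
        rw [hctₙ, ← hc'head]
        exact hchain.1 hlen0
      · rw [hs'q c h1, hs'τ c' h2] at hsc
        have := (hsle c' h2).2; omega
      · rw [hs'q c h1, hs'q c' h2] at hsc
        have hic := hidx c h1
        have hic' : q.idxOf c' = q.idxOf c + 1 := by omega
        have hic2 : q.idxOf c < q.length - 1 := by
          have := hidx c' h2; omega
        have hcc : q.get ⟨q.idxOf c, by omega⟩ = c :=
          hgetidx c h1 (by omega)
        have hcc' : q.get ⟨q.idxOf c + 1, by omega⟩ = c' := by
          have h := hgetidx c' h2 (hidx c' h2)
          have he : (⟨q.idxOf c', hidx c' h2⟩ : Fin q.length) = ⟨q.idxOf c + 1, by omega⟩ :=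
            Fin.ext hic'
          rw [he] at h
          exact h
        rw [← hcc, ← hcc']
        exact hchain.2 _ hic2
    · intro c hc k hk
      simp only at hk
      by_cases hcq : c ∈ q
      · rw [if_pos hcq] at hk
        rw [hs'q c hcq]
        exact (Option.some_inj.mp hk)
      · rw [if_neg hcq] at hk
        have hcτ : c ∈ τ := ((hmem c).mp hc).resolve_right hcq
        rw [hs'τ c hcτ]
        exact hplace c hcτ k hk
    · intro a b hab
      obtain ⟨ha, hb⟩ := hpdom a b hab
      rw [hs'τ a ha, hs'τ b hb]
      exact hp a b hab
  · rintro ⟨s, hbij, hadj, hplace, hp⟩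
    rw [hcard] at hbij
    have hsq : ∀ c ∈ q, s c = τ.card + q.idxOf c + 1 := by
      intro c hc
      refine hplace c ((hmem c).mpr (Or.inr hc)) _ ?_
      simp only [if_pos hc]
    refine ⟨s, ⟨?_, ?_, ?_⟩, ?_, ?_, ?_⟩
    · intro c hc
      have hc' := hbij.mapsTo ((hmem c).mpr (Or.inl hc))
      obtain ⟨h1, h2⟩ := hc'
      refine ⟨h1, ?_⟩
      by_contra hgt
      push_neg at hgt
      have hj : s c - τ.card - 1 < q.length := by omega
      set c₂ := q.get ⟨s c - τ.card - 1, hj⟩ with hc₂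
      have hc₂q : c₂ ∈ q := q.get_mem _
      have hsc₂ : s c₂ = s c := by
        rw [hsq c₂ hc₂q, hget _ hj]; omega
      have : c = c₂ := hbij.injOn ((hmem c).mpr (Or.inl hc)) ((hmem c₂).mpr (Or.inr hc₂q)) hsc₂.symm
      exact hqτ c₂ hc₂q (this ▸ hc)
    · intro a ha b hb hab
      exact hbij.injOn ((hmem a).mpr (Or.inl ha)) ((hmem b).mpr (Or.inl hb)) hab
    · intro k hk
      obtain ⟨hk1, hk2⟩ := hk
      obtain ⟨c, hc, hsc⟩ := hbij.surjOn (⟨hk1, hk2.trans (Nat.le_add_right _ _)⟩ : k ∈ Set.Icc 1 (τ.card + q.length))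
      rcases (hmem c).mp hc with h1 | h1
      · exact ⟨c, h1, hsc⟩
      · exfalso
        rw [hsq c h1] at hsc
        omega
    · intro c hc c' hc' hsc
      exact hadj c ((hmem c).mpr (Or.inl hc)) c' ((hmem c').mpr (Or.inl hc')) hsc
    · intro c hc k hk
      refine hplace c ((hmem c).mpr (Or.inl hc)) k ?_
      simp only [if_neg (fun hcq => hqτ c hcq hc)]
      exact hk
    · exact hp
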